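/- Let (Ω̃_k, γ_k) be binary extensions of probability spaces Ω_k for k = 1,2, let Ω = Ω₁ × Ω₂, A ⊆ Ω measurable, and let (Ω̃, γ) be the product binary extension according to A. Then the natural map α : Ω̃₁ × Ω̃₂ → Ω̃ defined by α(ω̃₁,ω̃₂) = (ω̃₁, γ₂(ω̃₂)) if (γ₁(ω̃₁), γ₂(ω̃₂)) ∈ A and α(ω̃₁,ω̃₂) = (γ₁(ω̃₁), ω̃₂) otherwise, is measure preserving, and the induced embedding L₂(Ω̃) ⊆ L₂(Ω̃₁) ⊗ L₂(Ω̃₂) restricts on L₂(Ω) to the tensor product of the embeddings L₂(Ω_k) ⊆ L₂(Ω̃_k). -/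
import Mathlib


open MeasureTheory
open scoped Classical

instance : MeasurableSpace (ZMod 2) := ⊤

/-- The uniform (half–half) probability measure on the two signs `ZMod 2` (`0 ↔ +1`, `1 ↔ −1`). -/
noncomputable def binMeasure : Measure (ZMod 2) := (PMF.uniformOfFintype (ZMod 2)).toMeasure

instance : IsProbabilityMeasure binMeasure := by unfold binMeasure; infer_instance

/-- The natural map `α : Ω̃₁ × Ω̃₂ → Ω̃` onto the product binary extension (realized as
`(Ω₁ × Ω₂) × {±1}`): over `A` the sign of the first factor is kept, off `A` that of the
second. -/
noncomputable def prodAlpha {Ω₁ Ω₂ : Type*} (A : Set (Ω₁ × Ω₂)) :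
    (Ω₁ × ZMod 2) × (Ω₂ × ZMod 2) → (Ω₁ × Ω₂) × ZMod 2 :=
  fun p => ((p.1.1, p.2.1), if (p.1.1, p.2.1) ∈ A then p.1.2 else p.2.2)

/-- Coordinate rearrangement `((a,b),(c,d)) ↦ ((a,c),(b,d))` is measure preserving. -/
lemma measurePreserving_rearrange {α β γ δ : Type*}
    [MeasurableSpace α] [MeasurableSpace β] [MeasurableSpace γ] [MeasurableSpace δ]
    (μa : Measure α) (μb : Measure β) (μc : Measure γ) (μd : Measure δ)
    [SFinite μa] [SFinite μb] [SFinite μc] [SFinite μd] :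
    MeasurePreserving (fun p : (α × β) × (γ × δ) => ((p.1.1, p.2.1), (p.1.2, p.2.2)))
      ((μa.prod μb).prod (μc.prod μd)) ((μa.prod μc).prod (μb.prod μd)) := by
  have e1 := measurePreserving_prodAssoc μa μb (μc.prod μd)
  have e2 := (MeasurePreserving.id μa).prod
    ((measurePreserving_prodAssoc μb μc μd).symm MeasurableEquiv.prodAssoc)
  have e3 := (MeasurePreserving.id μa).prod
    ((Measure.measurePreserving_swap (μ := μb) (ν := μc)).prod (MeasurePreserving.id μd))
  have e4 := (MeasurePreserving.id μa).prod (measurePreserving_prodAssoc μc μb μd)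
  have e5 := (measurePreserving_prodAssoc μa μc (μb.prod μd)).symm MeasurableEquiv.prodAssoc
  have h := ((((e5.comp e4).comp e3).comp e2).comp e1)
  exact h

/-- `α` is measure preserving, and the induced embedding
`L₂(Ω̃) ⊆ L₂(Ω̃₁) ⊗ L₂(Ω̃₂)` restricts on `L₂(Ω)` to the tensor product of the two
embeddings `L₂(Ω_k) ⊆ L₂(Ω̃_k)` (the composite map `Ω̃₁ × Ω̃₂ → Ω̃ → Ω` is `γ₁ × γ₂`). -/
theorem stmt_17 {Ω₁ Ω₂ : Type*} [MeasurableSpace Ω₁] [MeasurableSpace Ω₂]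
    (μ₁ : Measure Ω₁) (μ₂ : Measure Ω₂)
    [IsProbabilityMeasure μ₁] [IsProbabilityMeasure μ₂]
    (A : Set (Ω₁ × Ω₂)) (hA : MeasurableSet A) :
    MeasurePreserving (prodAlpha A)
      ((μ₁.prod binMeasure).prod (μ₂.prod binMeasure)) ((μ₁.prod μ₂).prod binMeasure) ∧
    ∀ g : Ω₁ × Ω₂ → ℂ,
      ((fun q : (Ω₁ × Ω₂) × ZMod 2 => g q.1) ∘ prodAlpha A)
        = fun p : (Ω₁ × ZMod 2) × (Ω₂ × ZMod 2) => g (p.1.1, p.2.1) := by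
  constructor
  · set g : (Ω₁ × Ω₂) → (ZMod 2 × ZMod 2) → ZMod 2 :=
      fun ω s => if ω ∈ A then s.1 else s.2 with hg_def
    have hgm : Measurable (Function.uncurry g) := by
      apply Measurable.ite (measurable_fst hA)
      · exact measurable_snd.fst
      · exact measurable_snd.snd
    have hg : ∀ ω : Ω₁ × Ω₂, Measure.map (g ω) (binMeasure.prod binMeasure) = binMeasure := by
      intro ω
      by_cases hω : ω ∈ A
      · have : g ω = Prod.fst := by funext s; simp [hg_def, hω]
        rw [this]; simp
      · have : g ω = Prod.snd := by funext s; simp [hg_def, hω]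
        rw [this]; simp
    have skew := (MeasurePreserving.id (μ₁.prod μ₂)).skew_product hgm
      (Filter.Eventually.of_forall hg)
    have final := skew.comp (measurePreserving_rearrange μ₁ binMeasure μ₂ binMeasure)
    exact final
  · intro g
    funext p
    rfl
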